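/- Let $G = \langle \sigma \rangle$ be a group of prime order $p$ (p odd) acting on a finite abelian $p$-group $A$ such that the fixed subgroup $A^G = \{a \in A : a^{\sigma} = a\}$ has order exactly $p$. Let $\nu = 1 + \sigma + \cdots + \sigma^{p-1}$, let $n$ be the smallest positive integer with $A^{(\sigma-1)^n} = 1$, and write $n = \alpha(p-1) + \beta$ with $0 \le \beta \le p-2$. If $A^{\nu} = 1$, then $A \cong (\mathbb{Z}/p^{\alpha+1}\mathbb{Z})^{\beta} \times (\mathbb{Z}/p^{\alpha}\mathbb{Z})^{p-1-\beta}$. In particular $\#A = p^n$ and the $p$-rank of $A$ is at most $p-1$. -/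

import Mathlib

open Finset

namespace GrasAux

lemma end_mul_apply {M : Type*} [AddCommGroup M] (f g : AddMonoid.End M) (x : M) :
    (f * g) x = f (g x) := rfl

lemma end_natCast_apply {M : Type*} [AddCommGroup M] (m : ℕ) (x : M) :
    ((m : AddMonoid.End M)) x = m • x := by simp

lemma end_neg_apply {M : Type*} [AddCommGroup M] (f : AddMonoid.End M) (x : M) :
    (-f) x = -(f x) := rfl

lemma end_sum_apply {M : Type*} [AddCommGroup M] {ι : Type*} (s : Finset ι)
    (f : ι → AddMonoid.End M) (x : M) : (∑ i ∈ s, f i) x = ∑ i ∈ s, f i x :=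
  AddMonoidHom.finset_sum_apply (M := M) (N := M) f s x

lemma geom_binom {R : Type*} [Ring R] (d : R) :
    ∀ N : ℕ, ∑ k ∈ range N, (1 + d) ^ k = ∑ j ∈ range N, (N.choose (j+1) : R) * d ^ j := by
  intro N
  induction N with
  | zero => simp
  | succ N ih =>
    rw [sum_range_succ, ih]
    have hpow : (1 + d) ^ N = ∑ j ∈ range (N+1), (N.choose j : R) * d ^ j := by
      rw [add_comm 1 d, (Commute.one_right d).add_pow]
      refine Finset.sum_congr rfl fun j hj => ?_
      rw [one_pow, mul_one, (Nat.cast_commute (N.choose j) (d ^ j)).eq]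
    rw [hpow]
    have key : ∑ j ∈ range (N+1), ((N+1).choose (j+1) : R) * d ^ j
        = ∑ j ∈ range N, (N.choose (j+1) : R) * d ^ j
          + ∑ j ∈ range (N+1), (N.choose j : R) * d ^ j := by
      calc ∑ j ∈ range (N+1), ((N+1).choose (j+1) : R) * d ^ j
          = ∑ j ∈ range (N+1), ((N.choose (j+1) : R) * d ^ j + (N.choose j : R) * d ^ j) := by
            refine Finset.sum_congr rfl fun j hj => ?_
            rw [Nat.choose_succ_succ', Nat.cast_add, add_mul, add_comm]
        _ = ∑ j ∈ range (N+1), (N.choose (j+1) : R) * d ^ j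
              + ∑ j ∈ range (N+1), (N.choose j : R) * d ^ j := Finset.sum_add_distrib
        _ = _ := by
            rw [sum_range_succ (fun j => (N.choose (j+1) : R) * d ^ j), Nat.choose_succ_self,
              Nat.cast_zero, zero_mul, add_zero]
    rw [key]

end GrasAux

theorem gras_aux (p : ℕ) (hp : p.Prime) (hp3 : 3 ≤ p)
    (M : Type*) [AddCommGroup M] [Fintype M]
    (d : AddMonoid.End M)
    (hfix : Nat.card {x : M // d x = 0} = p)
    (n : ℕ) (hnpos : 0 < n)
    (hdn : d ^ n = 0)
    (x₀ : M) (hx₀ : (d ^ (n-1)) x₀ ≠ 0)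
    (hnu : ∑ k ∈ Finset.range p, (1 + d) ^ k = 0)
    (α β : ℕ) (hβ : β ≤ p - 2) (hnab : n = α * (p - 1) + β) :
    Nonempty (((Fin β → ZMod (p ^ (α + 1))) × (Fin (p - 1 - β) → ZMod (p ^ α))) ≃+ M) ∧
    Nat.card M = p ^ n ∧
    ∀ x : M, ∃ c : Fin (p-1) → ℤ, x = ∑ i : Fin (p-1), c i • (d ^ (i:ℕ)) x₀ := by
  classical
  have hp2 : 2 ≤ p := hp.two_le
  have hppos : 0 < p := hp.pos
  have hbin : ∑ j ∈ range p, (p.choose (j+1) : AddMonoid.End M) * d ^ j = 0 := by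
    rw [← GrasAux.geom_binom]; exact hnu
  set u : AddMonoid.End M := ∑ j ∈ range (p-1), ((p.choose (j+1) / p : ℕ) : AddMonoid.End M) * d ^ j with hu_def
  have hpu : (p : AddMonoid.End M) * u = ∑ j ∈ range (p-1), (p.choose (j+1) : AddMonoid.End M) * d ^ j := by
    rw [hu_def, mul_sum]
    refine sum_congr rfl fun j hj => ?_
    have hdvd : p ∣ p.choose (j+1) :=
      hp.dvd_choose_self (Nat.succ_ne_zero j) (by have := mem_range.mp hj; omega)
    rw [← mul_assoc, ← Nat.cast_mul, Nat.mul_div_cancel' hdvd]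
  have hsplit := Finset.sum_range_succ (fun j => (p.choose (j+1) : AddMonoid.End M) * d ^ j) (p-1)
  rw [show p-1+1 = p by omega] at hsplit
  rw [hsplit, Nat.choose_self, Nat.cast_one, one_mul] at hbin
  have hdp1 : d ^ (p-1) = -((p:AddMonoid.End M) * u) := by
    rw [hpu]; exact eq_neg_of_add_eq_zero_right hbin
  -- commutation
  have hcd : ∀ (c k : ℕ), Commute d ((c:AddMonoid.End M) * d^k) := fun c k =>
    ((Nat.cast_commute c d).symm.mul_right ((Commute.refl d).pow_right k))
  have hcu : Commute d u := Commute.sum_right _ _ _ (fun j _ => hcd _ j)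
  set r : AddMonoid.End M := ∑ j ∈ range (p-2), ((p.choose (j+2) / p : ℕ) : AddMonoid.End M) * d ^ j with hr_def
  have hcr : Commute d r := Commute.sum_right _ _ _ (fun j _ => hcd _ j)
  have hur : u = 1 + d * r := by
    rw [hu_def, show p-1 = p-2+1 by omega,
      Finset.sum_range_succ' (fun j => ((p.choose (j+1) / p : ℕ) : AddMonoid.End M) * d ^ j) (p-2)]
    rw [pow_zero, mul_one, Nat.choose_one_right, Nat.div_self hppos, Nat.cast_one, add_comm]
    congr 1
    rw [hr_def, mul_sum]
    refine sum_congr rfl fun j hj => ?_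
    rw [← mul_assoc, ← (Nat.cast_commute (p.choose (j+1+1) / p) d).eq, mul_assoc, ← pow_succ']
  set t : AddMonoid.End M := -(d * r) with ht_def
  have hu1t : u = 1 - t := by rw [hur, ht_def, sub_neg_eq_add]
  have hct : Commute d t := ((Commute.refl d).mul_right hcr).neg_right
  have htn : t ^ n = 0 := by
    rw [ht_def, neg_pow, hcr.mul_pow, hdn, zero_mul, mul_zero]
  set w : AddMonoid.End M := ∑ k ∈ range n, t ^ k with hw_def
  have hcw : Commute d w := Commute.sum_right _ _ _ fun k _ => hct.pow_right k
  have hwu : w * u = 1 := by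
    rw [hu1t]
    calc w * (1-t) = -(w * (t - 1)) := by noncomm_ring
      _ = -(t^n - 1) := by rw [hw_def, geom_sum_mul]
      _ = 1 := by rw [htn]; noncomm_ring
  have huw : u * w = 1 := by
    rw [hu1t]
    calc (1-t) * w = -((t - 1) * w) := by noncomm_ring
      _ = -(t^n - 1) := by rw [hw_def, mul_geom_sum]
      _ = 1 := by rw [htn]; noncomm_ring
  have hpE : (p : AddMonoid.End M) = -(d ^ (p-1) * w) := by
    rw [hdp1, neg_mul, neg_neg, mul_assoc, huw, mul_one]
  -- vanishing of iterates on x₀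
  have hx0top : ∀ k, n ≤ k → (d ^ k) x₀ = 0 := by
    intro k hk
    have h1 : d ^ k = d ^ (k-n) * d ^ n := by rw [← pow_add]; congr 1; omega
    rw [h1, hdn, mul_zero]; rfl
  have hx0bot : ∀ k, k ≤ n-1 → (d ^ k) x₀ ≠ 0 := by
    intro k hk h0
    apply hx₀
    have h1 : d ^ (n-1) = d ^ (n-1-k) * d ^ k := by rw [← pow_add]; congr 1; omega
    rw [h1, GrasAux.end_mul_apply, h0, map_zero]
  -- the socle
  set e : M := (d ^ (n-1)) x₀ with he_def
  have hde : d e = 0 := by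
    have h1 : d ^ n = d * d ^ (n-1) := by
      rw [← pow_succ']; congr 1; omega
    calc d e = (d ^ n) x₀ := by rw [h1]; rfl
      _ = 0 := by rw [hdn]; rfl
  have hkercard : Nat.card (AddMonoidHom.ker d) = p := by
    rw [← hfix]
    exact Nat.card_congr (Equiv.subtypeEquivRight (fun x => AddMonoidHom.mem_ker))
  have hclose : AddSubgroup.closure {e} = AddMonoidHom.ker d := by
    have hle : AddSubgroup.closure {e} ≤ AddMonoidHom.ker d := by
      rw [AddSubgroup.closure_le]
      intro y hy
      rcases Set.mem_singleton_iff.mp hy with rfl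
      exact AddMonoidHom.mem_ker.mpr hde
    have hne : Nat.card (AddSubgroup.closure ({e} : Set M)) ≠ 1 := by
      intro h1
      apply hx₀
      have hbot : (AddSubgroup.closure ({e} : Set M)) = ⊥ :=
        AddSubgroup.eq_bot_of_card_eq _ h1
      have he' : e ∈ (⊥ : AddSubgroup M) :=
        hbot ▸ AddSubgroup.subset_closure (Set.mem_singleton e)
      simpa [he_def] using he'
    have hdvd : Nat.card (AddSubgroup.closure ({e} : Set M)) ∣ p :=
      hkercard ▸ AddSubgroup.card_dvd_of_le hle
    have hcard : Nat.card (AddSubgroup.closure ({e} : Set M)) = p :=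
      ((hp.eq_one_or_self_of_dvd _ hdvd).resolve_left hne)
    apply SetLike.coe_injective
    apply Set.eq_of_subset_of_ncard_le hle
    rw [← Nat.card_coe_set_eq, ← Nat.card_coe_set_eq]
    have h2 : Nat.card ((AddSubgroup.closure ({e} : Set M) : Set M)) = p := hcard
    have h3 : Nat.card ((AddMonoidHom.ker d : AddSubgroup M) : Set M) = p := hkercard
    omega
  have hsocle : ∀ i, i ≤ n-1 → AddMonoidHom.ker d ≤ AddMonoidHom.range (d ^ i) := by
    intro i hi
    rw [← hclose, AddSubgroup.closure_le]
    intro y hy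
    rcases Set.mem_singleton_iff.mp hy with rfl
    refine ⟨(d ^ (n-1-i)) x₀, ?_⟩
    change (d ^ i * d ^ (n-1-i)) x₀ = e
    rw [← pow_add, he_def]
    congr 2
    omega
  -- cardinality of ranges
  have hcardstep : ∀ i, i < n →
      Nat.card (AddMonoidHom.range (d ^ i)) = p * Nat.card (AddMonoidHom.range (d ^ (i+1))) := by
    intro i hi
    set H := AddMonoidHom.range (d ^ i) with hH
    set f : H →+ M := AddMonoidHom.comp (d : M →+ M) H.subtype with hf
    have h1 : Nat.card H = Nat.card (H ⧸ f.ker) * Nat.card f.ker :=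
      AddSubgroup.card_eq_card_quotient_mul_card_addSubgroup f.ker
    have h2 : Nat.card (H ⧸ f.ker) = Nat.card f.range :=
      Nat.card_congr (QuotientAddGroup.quotientKerEquivRange f).toEquiv
    have hrange : f.range = AddMonoidHom.range (d ^ (i+1)) := by
      ext y
      constructor
      · rintro ⟨⟨x, z, rfl⟩, rfl⟩
        refine ⟨z, ?_⟩
        show (d ^ (i+1)) z = f ⟨(d ^ i) z, z, rfl⟩
        have : d ^ (i+1) = d * d ^ i := by rw [← pow_succ']
        rw [this]; rfl
      · rintro ⟨z, rfl⟩
        refine ⟨⟨(d ^ i) z, z, rfl⟩, ?_⟩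
        show d ((d ^ i) z) = (d ^ (i+1)) z
        have : d ^ (i+1) = d * d ^ i := by rw [← pow_succ']
        rw [this]; rfl
    have hkerf : Nat.card f.ker = p := by
      rw [← hkercard]
      apply Nat.card_congr
      refine ⟨fun x => ⟨x.1.1, AddMonoidHom.mem_ker.mpr ?_⟩,
        fun y => ⟨⟨y.1, hsocle i (by omega) y.2⟩, AddMonoidHom.mem_ker.mpr ?_⟩, ?_, ?_⟩
      · exact AddMonoidHom.mem_ker.mp x.2
      · exact AddMonoidHom.mem_ker.mp y.2
      · intro x
        apply Subtype.ext; apply Subtype.ext; rfl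
      · intro y
        apply Subtype.ext; rfl
    rw [h1, h2, hrange, hkerf, mul_comm]
  have hcards : ∀ j, j ≤ n → Nat.card (AddMonoidHom.range (d ^ (n - j))) = p ^ j := by
    intro j
    induction j with
    | zero =>
      intro _
      rw [Nat.sub_zero, hdn, pow_zero]
      have hbot : AddMonoidHom.range (0 : M →+ M) = ⊥ := by
        ext y
        simp [AddMonoidHom.mem_range, eq_comm]
      rw [show AddMonoidHom.range (0 : AddMonoid.End M) = ⊥ from hbot]
      simp
    | succ j ih =>
      intro hj
      have h1 : n - (j+1) < n := by omega
      have h2 := hcardstep (n-(j+1)) h1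
      rw [show n-(j+1)+1 = n-j by omega] at h2
      rw [h2, ih (by omega), pow_succ, mul_comm]
  have hcardM : Nat.card M = p ^ n := by
    have h1 := hcards n (le_refl n)
    rw [Nat.sub_self, pow_zero] at h1
    have h2 : AddMonoidHom.range ((1 : AddMonoid.End M) : M →+ M) = ⊤ := by
      ext y; constructor
      · intro _; trivial
      · intro _; exact ⟨y, rfl⟩
    rw [h2] at h1
    rw [← h1]
    exact (Nat.card_congr AddSubgroup.topEquiv.toEquiv).symm
  -- the subgroup generated by x₀, d x₀, ..., d^(p-2) x₀
  haveI : NeZero (p-1) := ⟨by omega⟩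
  set Ψ : (Fin (p-1) → ℤ) →+ M := AddMonoidHom.mk'
      (fun c => ∑ i : Fin (p-1), c i • (d ^ (i:ℕ)) x₀)
      (by
        intro a b
        simp only [Pi.add_apply, add_smul]
        rw [Finset.sum_add_distrib]) with hΨ_def
  set B := Ψ.range with hB_def
  have hΨapp : ∀ c, Ψ c = ∑ i : Fin (p-1), c i • (d ^ (i:ℕ)) x₀ := fun c => rfl
  have hBgen : ∀ i : ℕ, i < p-1 → (d ^ i) x₀ ∈ B := by
    intro i hi
    refine ⟨Pi.single ⟨i, hi⟩ 1, ?_⟩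
    rw [hΨapp]
    rw [Finset.sum_eq_single (⟨i, hi⟩ : Fin (p-1))]
    · rw [Pi.single_eq_same, one_smul]
    · intro b _ hb
      rw [Pi.single_eq_of_ne hb, zero_smul]
    · intro h
      exact absurd (Finset.mem_univ _) h
  have hBall : ∀ k : ℕ, (d ^ k) x₀ ∈ B := by
    intro k
    induction k using Nat.strong_induction_on with
    | _ k ih =>
    by_cases hk : k < p-1
    · exact hBgen k hk
    · push_neg at hk
      have hdk : d ^ k = -(∑ j ∈ range (p-1), (p.choose (j+1) : AddMonoid.End M) * d ^ (k-(p-1)+j)) := by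
        have h1 : d ^ k = d ^ (k-(p-1)) * d ^ (p-1) := by rw [← pow_add]; congr 1; omega
        rw [h1, hdp1, hpu, mul_neg, mul_sum]
        congr 1
        refine sum_congr rfl fun j hj => ?_
        rw [← mul_assoc, ← (Nat.cast_commute (p.choose (j+1)) (d ^ (k-(p-1)))).eq,
          mul_assoc, ← pow_add]
      have h2 : (d ^ k) x₀ = -(∑ j ∈ range (p-1), (p.choose (j+1)) • ((d ^ (k-(p-1)+j)) x₀)) := by
        rw [hdk, GrasAux.end_neg_apply, GrasAux.end_sum_apply]
        congr 1
      rw [h2]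
      apply neg_mem
      apply sum_mem
      intro j hj
      have hjlt : j < p - 1 := mem_range.mp hj
      exact AddSubgroup.nsmul_mem _ (ih _ (by omega)) _
  have hx₀B : x₀ ∈ B := by
    have := hBall 0
    rwa [pow_zero] at this
  have hBd : ∀ x ∈ B, d x ∈ B := by
    rintro x ⟨c, rfl⟩
    rw [hΨapp, map_sum]
    apply sum_mem
    intro i _
    rw [map_zsmul]
    apply zsmul_mem
    have : d ((d ^ (i:ℕ)) x₀) = (d ^ ((i:ℕ)+1)) x₀ := by
      rw [pow_succ']; rfl
    rw [this]
    exact hBall _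
  have hBdk : ∀ (k : ℕ) (x : M), x ∈ B → (d ^ k) x ∈ B := by
    intro k
    induction k with
    | zero => intro x hx; rwa [pow_zero]
    | succ k ih =>
      intro x hx
      have : (d ^ (k+1)) x = d ((d ^ k) x) := by rw [pow_succ']; rfl
      rw [this]
      exact hBd _ (ih x hx)
  have hBr : ∀ x ∈ B, r x ∈ B := by
    intro x hx
    rw [hr_def, GrasAux.end_sum_apply]
    apply sum_mem
    intro j _
    rw [GrasAux.end_mul_apply, GrasAux.end_natCast_apply]
    exact AddSubgroup.nsmul_mem _ (hBdk j x hx) _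
  have hBt : ∀ x ∈ B, t x ∈ B := by
    intro x hx
    rw [ht_def, GrasAux.end_neg_apply, GrasAux.end_mul_apply]
    exact neg_mem (hBd _ (hBr x hx))
  have hBtk : ∀ (k : ℕ) (x : M), x ∈ B → (t ^ k) x ∈ B := by
    intro k
    induction k with
    | zero => intro x hx; rwa [pow_zero]
    | succ k ih =>
      intro x hx
      have : (t ^ (k+1)) x = t ((t ^ k) x) := by rw [pow_succ']; rfl
      rw [this]
      exact hBt _ (ih x hx)
  have hBw : ∀ x ∈ B, w x ∈ B := by
    intro x hx
    rw [hw_def, GrasAux.end_sum_apply]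
    exact sum_mem fun k _ => hBtk k x hx
  have hpB : ∀ x ∈ B, ∃ b ∈ B, (p:ℤ) • x = d b := by
    intro x hx
    refine ⟨-((d ^ (p-2)) (w x)), neg_mem (hBdk _ _ (hBw x hx)), ?_⟩
    have h1 : (p:ℤ) • x = (p:ℕ) • x := natCast_zsmul x p
    rw [h1, ← GrasAux.end_natCast_apply, hpE, GrasAux.end_neg_apply, GrasAux.end_mul_apply,
      map_neg]
    congr 1
    have h3 : d ^ (p-1) = d * d ^ (p-2) := by rw [← pow_succ']; congr 1; omega
    rw [h3]; rfl
  -- the quotient by the image of d has order p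
  have hquot : Nat.card (M ⧸ AddMonoidHom.range (d : M →+ M)) = p := by
    have h1 := AddSubgroup.card_eq_card_quotient_mul_card_addSubgroup
      (AddMonoidHom.range (d : M →+ M))
    have h2 := AddSubgroup.card_eq_card_quotient_mul_card_addSubgroup
      (AddMonoidHom.ker (d : M →+ M))
    have h3 : Nat.card (M ⧸ AddMonoidHom.ker (d : M →+ M))
        = Nat.card (AddMonoidHom.range (d : M →+ M)) :=
      Nat.card_congr (QuotientAddGroup.quotientKerEquivRange (d : M →+ M)).toEquiv
    have hR : 0 < Nat.card (AddMonoidHom.range (d : M →+ M)) := Nat.card_pos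
    rw [h3, hkercard] at h2
    rw [h2] at h1
    have := Nat.eq_of_mul_eq_mul_right hR (mul_comm p _ ▸ h1.symm)
    omega
  have hx0notrange : x₀ ∉ AddMonoidHom.range (d : M →+ M) := by
    rintro ⟨y, hy⟩
    apply hx₀
    rw [he_def] at *
    rw [← hy]
    have h1 : d ^ n = d ^ (n-1) * d := by rw [← pow_succ]; congr 1; omega
    have : (d ^ (n-1)) (d y) = (d ^ n) y := by rw [h1]; rfl
    exact this.trans (by rw [hdn]; rfl)
  have hdvd0 : ∀ c : ℤ, c • x₀ ∈ AddMonoidHom.range (d : M →+ M) → (p:ℤ) ∣ c := by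
    intro c hc
    set π := QuotientAddGroup.mk' (AddMonoidHom.range (d : M →+ M)) with hπ_def
    have hπ0 : π x₀ ≠ 0 := by
      intro h
      exact hx0notrange ((QuotientAddGroup.eq_zero_iff x₀).mp h)
    have hord : addOrderOf (π x₀) = p := by
      have h1 : addOrderOf (π x₀) ∣ p := hquot ▸ addOrderOf_dvd_natCard (π x₀)
      rcases hp.eq_one_or_self_of_dvd _ h1 with h|h
      · exact absurd (AddMonoid.addOrderOf_eq_one_iff.mp h) hπ0
      · exact h
    have h2 : c • (π x₀) = 0 := by
      rw [← map_zsmul π]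
      exact (QuotientAddGroup.eq_zero_iff _).mpr hc
    have h3 := addOrderOf_dvd_iff_zsmul_eq_zero.mpr h2
    rwa [hord] at h3
  have hBrange : ∀ y ∈ B, y ∈ AddMonoidHom.range (d : M →+ M) → ∃ b ∈ B, y = d b := by
    rintro y ⟨c, rfl⟩ hy
    rw [hΨapp] at hy ⊢
    set z : M := ∑ i ∈ (univ.erase (0 : Fin (p-1))), c i • (d ^ ((i:ℕ)-1)) x₀ with hz_def
    have hzB : z ∈ B := sum_mem fun i _ => zsmul_mem (hBall _) _
    have hdz : d z = ∑ i ∈ (univ.erase (0 : Fin (p-1))), c i • (d ^ (i:ℕ)) x₀ := by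
      rw [hz_def, map_sum]
      refine sum_congr rfl fun i hi => ?_
      rw [map_zsmul]
      congr 1
      have hi0 : (i:ℕ) ≠ 0 := by
        intro h
        exact (Finset.mem_erase.mp hi).1 (Fin.ext h)
      have h4 : d ^ (i:ℕ) = d * d ^ ((i:ℕ)-1) := by rw [← pow_succ']; congr 1; omega
      rw [h4]; rfl
    have hsum : ∑ i : Fin (p-1), c i • (d ^ (i:ℕ)) x₀
        = c 0 • x₀ + ∑ i ∈ (univ.erase (0 : Fin (p-1))), c i • (d ^ (i:ℕ)) x₀ := by
      rw [← Finset.add_sum_erase _ (fun i : Fin (p-1) => c i • (d ^ (i:ℕ)) x₀)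
        (Finset.mem_univ (0 : Fin (p-1)))]
      congr 1
    have hy0 : c 0 • x₀ ∈ AddMonoidHom.range (d : M →+ M) := by
      have heq : c 0 • x₀ = (∑ i : Fin (p-1), c i • (d ^ (i:ℕ)) x₀) - d z := by
        rw [hdz, hsum]; abel
      rw [heq]
      exact sub_mem hy ⟨z, rfl⟩
    obtain ⟨c₁, hc₁⟩ := hdvd0 _ hy0
    obtain ⟨b, hbB, hb⟩ := hpB x₀ hx₀B
    refine ⟨c₁ • b + z, add_mem (zsmul_mem hbB _) hzB, ?_⟩
    rw [map_add, hdz, map_zsmul, ← hb, smul_smul, hsum]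
    congr 2
    rw [hc₁, mul_comm]
  have hBtop : ∀ x : M, x ∈ B := by
    have main : ∀ m, ∀ x : M, (d ^ m) x = 0 → x ∈ B := by
      intro m
      induction m with
      | zero =>
        intro x hx
        rw [pow_zero] at hx
        have : x = 0 := hx
        rw [this]; exact zero_mem B
      | succ m ih =>
        intro x hx
        have hdx : d x ∈ B := by
          apply ih
          have : (d ^ m) (d x) = (d ^ (m+1)) x := by rw [pow_succ]; rfl
          rw [this]; exact hx
        obtain ⟨b, hbB, hbeq⟩ := hBrange (d x) hdx ⟨x, rfl⟩
        have hxb : x - b ∈ AddMonoidHom.ker (d : M →+ M) := by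
          change d (x - b) = 0
          rw [map_sub, ← hbeq, sub_self]
        have hkB : AddMonoidHom.ker (d : M →+ M) ≤ B := by
          rw [← hclose, AddSubgroup.closure_le]
          intro y hy
          rcases Set.mem_singleton_iff.mp hy with rfl
          exact hBall (n-1)
        have := add_mem (hkB hxb) hbB
        simpa using this
    intro x
    apply main n x
    rw [hdn]; rfl
  -- killing lemmas
  have hpowE : ∀ a : ℕ, ((p : AddMonoid.End M))^a = (-1)^a * (w^a * d^((p-1)*a)) := by
    intro a
    induction a with
    | zero => simp
    | succ a ih =>
      have hpE' : (p : AddMonoid.End M) = -(w * d ^ (p-1)) := by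
        rw [hpE, (hcw.pow_left (p-1)).eq]
      rw [pow_succ, ih, hpE']
      have hcore : w^a * d^((p-1)*a) * (w * d^(p-1)) = w^(a+1) * d^((p-1)*(a+1)) := by
        calc w^a * d^((p-1)*a) * (w * d^(p-1))
            = w^a * (d^((p-1)*a) * w) * d^(p-1) := by noncomm_ring
          _ = w^a * (w * d^((p-1)*a)) * d^(p-1) := by rw [(hcw.pow_left ((p-1)*a)).eq]
          _ = (w^a * w) * (d^((p-1)*a) * d^(p-1)) := by noncomm_ring
          _ = w^(a+1) * d^((p-1)*(a+1)) := by rw [← pow_succ, ← pow_add, Nat.mul_succ]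
      calc (-1)^a * (w^a * d^((p-1)*a)) * -(w * d^(p-1))
          = (-1)^(a+1) * (w^a * d^((p-1)*a) * (w * d^(p-1))) := by noncomm_ring
        _ = (-1)^(a+1) * (w^(a+1) * d^((p-1)*(a+1))) := by rw [hcore]
  have hkillgen : ∀ (a : ℕ) (y : M), (d^((p-1)*a)) y = 0 → ((p^a : ℕ) : ℤ) • y = 0 := by
    intro a y hy
    have h1 : ((p^a : ℕ) : ℤ) • y = (p^a : ℕ) • y := natCast_zsmul y (p^a)
    rw [h1, ← GrasAux.end_natCast_apply, Nat.cast_pow, hpowE a,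
      GrasAux.end_mul_apply, GrasAux.end_mul_apply, hy, map_zero, map_zero]
  have hkill1 : ∀ x : M, ((p^(α+1) : ℕ) : ℤ) • x = 0 := by
    intro x
    apply hkillgen
    have hle : n ≤ (p-1)*(α+1) := by
      rw [hnab, Nat.mul_succ, Nat.mul_comm (p-1) α]
      exact Nat.add_le_add_left (by omega) _
    have h1 : d ^ ((p-1)*(α+1)) = d ^ ((p-1)*(α+1) - n) * d ^ n := by
      rw [← pow_add]; congr 1; omega
    rw [h1, hdn, mul_zero]; rfl
  have hkill2 : ∀ k : ℕ, β ≤ k → ((p^α : ℕ) : ℤ) • ((d^k) x₀) = 0 := by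
    intro k hk
    apply hkillgen
    rw [← GrasAux.end_mul_apply, ← pow_add]
    apply hx0top
    rw [hnab, Nat.mul_comm (p-1) α]
    exact Nat.add_le_add_left hk _
  -- the isomorphism
  haveI : NeZero (p ^ (α+1)) := ⟨pow_ne_zero _ hp.ne_zero⟩
  haveI : NeZero (p ^ α) := ⟨pow_ne_zero _ hp.ne_zero⟩
  set L1 : Fin β → (ZMod (p^(α+1)) →+ M) := fun i =>
    ZMod.lift (p^(α+1)) ⟨zmultiplesHom M ((d ^ (i:ℕ)) x₀), by
      rw [zmultiplesHom_apply]
      exact_mod_cast hkill1 _⟩ with hL1_def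
  set L2 : Fin (p-1-β) → (ZMod (p^α) →+ M) := fun j =>
    ZMod.lift (p^α) ⟨zmultiplesHom M ((d ^ (β + (j:ℕ))) x₀), by
      rw [zmultiplesHom_apply]
      exact_mod_cast hkill2 _ (Nat.le_add_right β j)⟩ with hL2_def
  set Φ : ((Fin β → ZMod (p ^ (α + 1))) × (Fin (p - 1 - β) → ZMod (p ^ α))) →+ M :=
    AddMonoidHom.mk'
      (fun z => (∑ i : Fin β, L1 i (z.1 i)) + (∑ j : Fin (p-1-β), L2 j (z.2 j)))
      (by
        intro a b
        simp only [Prod.fst_add, Prod.snd_add, Pi.add_apply, map_add]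
        rw [Finset.sum_add_distrib, Finset.sum_add_distrib]
        abel) with hΦ_def
  have hΦapp : ∀ z, Φ z = (∑ i : Fin β, L1 i (z.1 i)) + (∑ j : Fin (p-1-β), L2 j (z.2 j)) :=
    fun z => rfl
  have hL1one : ∀ i : Fin β, L1 i 1 = (d ^ (i:ℕ)) x₀ := by
    intro i
    have h1 : ((1:ℤ) : ZMod (p^(α+1))) = 1 := Int.cast_one
    rw [hL1_def, ← h1, ZMod.lift_coe, zmultiplesHom_apply, one_smul]
  have hL2one : ∀ j : Fin (p-1-β), L2 j 1 = (d ^ (β + (j:ℕ))) x₀ := by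
    intro j
    have h1 : ((1:ℤ) : ZMod (p^α)) = 1 := Int.cast_one
    rw [hL2_def, ← h1, ZMod.lift_coe, zmultiplesHom_apply, one_smul]
  have hΦe : ∀ i : ℕ, i < p-1 → (d ^ i) x₀ ∈ Φ.range := by
    intro i hi
    by_cases hib : i < β
    · refine ⟨(Pi.single ⟨i,hib⟩ 1, 0), ?_⟩
      rw [hΦapp]
      dsimp only
      have h2 : ∑ j : Fin (p-1-β), L2 j ((0 : Fin (p-1-β) → ZMod (p^α)) j) = 0 := by
        simp
      rw [h2, add_zero]
      rw [Finset.sum_eq_single (⟨i,hib⟩ : Fin β)]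
      · rw [Pi.single_eq_same, hL1one]
      · intro b _ hb
        rw [Pi.single_eq_of_ne hb, map_zero]
      · intro h; exact absurd (Finset.mem_univ _) h
    · push_neg at hib
      have hjb : i - β < p-1-β := by omega
      refine ⟨(0, Pi.single ⟨i-β,hjb⟩ 1), ?_⟩
      rw [hΦapp]
      dsimp only
      have h2 : ∑ j : Fin β, L1 j ((0 : Fin β → ZMod (p^(α+1))) j) = 0 := by simp
      rw [h2, zero_add]
      rw [Finset.sum_eq_single (⟨i-β,hjb⟩ : Fin (p-1-β))]
      · rw [Pi.single_eq_same, hL2one]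
        congr 2
        show β + (i - β) = i
        omega
      · intro b _ hb
        rw [Pi.single_eq_of_ne hb, map_zero]
      · intro h; exact absurd (Finset.mem_univ _) h
  have hΦsurj : Function.Surjective Φ := by
    intro x
    obtain ⟨c, rfl⟩ := hBtop x
    have : Ψ c ∈ Φ.range := by
      rw [hΨapp]
      exact sum_mem fun i _ => zsmul_mem (hΦe (i:ℕ) i.2) _
    exact this
  have harith : (α+1)*β + α*(p-1-β) = n := by
    obtain ⟨γ, hγ⟩ : ∃ γ, p - 1 - β = γ := ⟨_, rfl⟩
    have h1 : p - 1 = γ + β := by omega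
    rw [hγ, hnab, h1]
    ring
  have hcardT : Nat.card ((Fin β → ZMod (p ^ (α + 1))) × (Fin (p - 1 - β) → ZMod (p ^ α)))
      = p ^ n := by
    rw [Nat.card_prod, Nat.card_pi, Nat.card_pi]
    simp only [Nat.card_zmod]
    rw [Finset.prod_const, Finset.prod_const, Finset.card_univ, Finset.card_univ,
      Fintype.card_fin, Fintype.card_fin, ← pow_mul, ← pow_mul, ← pow_add]
    rw [← harith]
  have hbij : Function.Bijective Φ := by
    rw [Fintype.bijective_iff_surjective_and_card]
    constructor
    · exact hΦsurj
    · rw [← Nat.card_eq_fintype_card, ← Nat.card_eq_fintype_card, hcardT, hcardM]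
  refine ⟨⟨AddEquiv.ofBijective Φ hbij⟩, hcardM, ?_⟩
  intro x
  obtain ⟨c, hc⟩ := hBtop x
  exact ⟨c, hc.symm⟩

/-- G. Gras's structure theorem (norm-trivial case): let `G = ⟨σ⟩` of odd prime order `p` act
on a finite abelian `p`-group `A` with `#A^G = p`.  Let `n` be the smallest positive integer
with `A^{(σ-1)^n} = 1` and write `n = α(p-1) + β`, `0 ≤ β ≤ p-2`.  If the norm
`ν = 1 + σ + ⋯ + σ^{p-1}` kills `A`, then
`A ≅ (ℤ/p^{α+1})^β × (ℤ/p^α)^{p-1-β}`; in particular `#A = p^n` and the `p`-rank of `A`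
is at most `p-1`. -/
theorem gras_structure_theorem (p : ℕ) (hp : p.Prime) (hodd : Odd p)
    (A : Type*) [CommGroup A] [Fintype A] (hA : IsPGroup p A)
    (σ : MulAut A) (hσ : σ ^ p = 1)
    (hfix : Nat.card {a : A // σ a = a} = p)
    (D : A → A) (hD : D = fun a => σ a * a⁻¹)
    (n : ℕ) (hnpos : 0 < n)
    (hn : ∀ a : A, D^[n] a = 1)
    (hmin : ∀ j, 0 < j → j < n → ∃ a : A, D^[j] a ≠ 1)
    (hnu : ∀ a : A, ∏ k ∈ Finset.range p, (σ ^ k) a = 1)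
    (α β : ℕ) (hβ : β ≤ p - 2) (hnab : n = α * (p - 1) + β) :
    Nonempty (A ≃* Multiplicative ((Fin β → ZMod (p ^ (α + 1))) × (Fin (p - 1 - β) → ZMod (p ^ α)))) ∧
    Nat.card A = p ^ n ∧
    ∃ S : Finset A, S.card ≤ p - 1 ∧ Subgroup.closure (S : Set A) = ⊤ := by
  classical
  subst hD
  have hp3 : 3 ≤ p := by
    have h2 := hp.two_le
    rcases Nat.odd_iff.mp hodd with h
    omega
  set s : AddMonoid.End (Additive A) := MonoidHom.toAdditive σ.toMonoidHom with hs_def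
  set d : AddMonoid.End (Additive A) := s - 1 with hd_def
  have hsapp : ∀ a : A, s (Additive.ofMul a) = Additive.ofMul (σ a) := by
    intro a
    rw [hs_def]
    rfl
  have happly : ∀ a : A, d (Additive.ofMul a) = Additive.ofMul (σ a * a⁻¹) := by
    intro a
    rw [hd_def]
    have h1 : (s - 1 : AddMonoid.End (Additive A)) (Additive.ofMul a)
        = s (Additive.ofMul a) - Additive.ofMul a := rfl
    rw [h1, hsapp, ofMul_mul, ofMul_inv]
    abel
  have hiter : ∀ (k : ℕ) (a : A),
      (d ^ k) (Additive.ofMul a) = Additive.ofMul ((fun a => σ a * a⁻¹)^[k] a) := by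
    intro k
    induction k with
    | zero => intro a; rfl
    | succ k ih =>
      intro a
      have h1 : (d ^ (k+1)) (Additive.ofMul a) = (d ^ k) (d (Additive.ofMul a)) := by
        rw [pow_succ]; rfl
      rw [h1, happly, ih, Function.iterate_succ_apply]
  have hdn : d ^ n = 0 := by
    refine DFunLike.ext _ _ fun x => ?_
    have h1 := hiter n (Additive.toMul x)
    rw [show Additive.ofMul (Additive.toMul x) = x from rfl] at h1
    rw [h1, hn]
    rfl
  have hx : ∃ x₀ : Additive A, (d ^ (n-1)) x₀ ≠ 0 := by
    rcases Nat.lt_or_ge 1 n with hn1 | hn1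
    · obtain ⟨a, ha⟩ := hmin (n-1) (by omega) (by omega)
      refine ⟨Additive.ofMul a, ?_⟩
      rw [hiter]
      simpa using ha
    · have hn1' : n = 1 := by omega
      by_contra hco
      push_neg at hco
      have hall : ∀ a : A, a = 1 := by
        intro a
        have h2 := hco (Additive.ofMul a)
        rw [hn1'] at h2
        simpa using h2
      haveI : Unique {a : A // σ a = a} :=
        ⟨⟨⟨1, by rw [map_one]⟩⟩, fun y => Subtype.ext ((hall _).trans (hall _).symm)⟩
      rw [Nat.card_unique] at hfix
      omega
  obtain ⟨x₀, hx₀⟩ := hx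
  have hfix' : Nat.card {x : Additive A // d x = 0} = p := by
    rw [← hfix]
    apply Nat.card_congr
    refine Equiv.subtypeEquiv Additive.toMul (fun x => ?_)
    have h1 : d x = Additive.ofMul (σ (Additive.toMul x) * (Additive.toMul x)⁻¹) :=
      happly (Additive.toMul x)
    rw [h1, ofMul_eq_zero, mul_inv_eq_one]
  have hnu' : ∑ k ∈ Finset.range p, (1 + d) ^ k = 0 := by
    have hs1 : (1 : AddMonoid.End (Additive A)) + d = s := by
      rw [hd_def]; abel
    rw [hs1]
    refine DFunLike.ext _ _ fun x => ?_
    rw [GrasAux.end_sum_apply]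
    have hsk : ∀ (k : ℕ) (a : A), (s ^ k) (Additive.ofMul a) = Additive.ofMul ((σ ^ k) a) := by
      intro k
      induction k with
      | zero => intro a; rfl
      | succ k ih =>
        intro a
        have h1 : (s ^ (k+1)) (Additive.ofMul a) = (s ^ k) (s (Additive.ofMul a)) := by
          rw [pow_succ]; rfl
        have h2 : (σ ^ (k+1)) a = (σ ^ k) (σ a) := by
          rw [pow_succ]; rfl
        rw [h1, hsapp, ih, h2]
    have h3 : ∀ k ∈ Finset.range p, (s ^ k) x = Additive.ofMul ((σ ^ k) (Additive.toMul x)) := by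
      intro k _
      exact hsk k (Additive.toMul x)
    rw [Finset.sum_congr rfl h3]
    have h4 : ∀ (T : Finset ℕ), ∑ k ∈ T, Additive.ofMul ((σ ^ k) (Additive.toMul x))
        = Additive.ofMul (∏ k ∈ T, (σ ^ k) (Additive.toMul x)) := by
      intro T
      induction T using Finset.induction with
      | empty => rfl
      | @insert _ _ hni ih =>
        rw [Finset.sum_insert hni, Finset.prod_insert hni, ofMul_mul, ih]
    rw [h4, hnu]
    rfl
  obtain ⟨⟨eqv⟩, hcard, hxrep⟩ := gras_aux p hp hp3 (Additive A) d hfix' n hnpos hdn x₀ hx₀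
    hnu' α β hβ hnab
  refine ⟨⟨AddEquiv.toMultiplicativeRight eqv.symm⟩, ?_, ?_⟩
  · rw [← hcard]
    exact Nat.card_congr (Additive.ofMul (α := A))
  · refine ⟨Finset.image (fun i : Fin (p-1) => Additive.toMul ((d ^ (i:ℕ)) x₀)) Finset.univ,
      ?_, ?_⟩
    · calc (Finset.image (fun i : Fin (p-1) => Additive.toMul ((d ^ (i:ℕ)) x₀))
            Finset.univ).card ≤ (Finset.univ : Finset (Fin (p-1))).card :=
              Finset.card_image_le
        _ = p - 1 := by rw [Finset.card_univ, Fintype.card_fin]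
    · rw [eq_top_iff]
      intro a _
      obtain ⟨c, hc⟩ := hxrep (Additive.ofMul a)
      have ha : a = Additive.toMul (∑ i : Fin (p-1), c i • (d ^ (i:ℕ)) x₀) := by
        rw [← hc]; rfl
      rw [ha]
      have key : ∀ T : Finset (Fin (p-1)),
          Additive.toMul (∑ i ∈ T, c i • (d ^ (i:ℕ)) x₀) ∈
            Subgroup.closure ((Finset.image
              (fun i : Fin (p-1) => Additive.toMul ((d ^ (i:ℕ)) x₀)) Finset.univ : Finset A)
              : Set A) := by
        intro T
        induction T using Finset.induction with
        | empty => exact one_mem _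
        | @insert i T hni ih =>
          rw [Finset.sum_insert hni]
          have h5 : Additive.toMul (c i • (d ^ (i:ℕ)) x₀ + ∑ j ∈ T, c j • (d ^ (j:ℕ)) x₀)
              = Additive.toMul (c i • (d ^ (i:ℕ)) x₀)
                * Additive.toMul (∑ j ∈ T, c j • (d ^ (j:ℕ)) x₀) := rfl
          rw [h5]
          refine mul_mem ?_ ih
          rw [toMul_zsmul]
          refine zpow_mem (Subgroup.subset_closure ?_) _
          simp only [Finset.coe_image, Set.mem_image, Finset.mem_coe]
          exact ⟨i, by simp⟩
      exact key Finset.univ
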